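/- arXiv:1412.1326 — 3 statements merged into one kernel-verified Lean document; each statement's English description precedes it below -/
import Mathlib

section
/- Let N be a nilpotent group of nilpotency class c₀ with generating set B. Then for each 1 ≤ s ≤ c₀, the s-th term N_s of the lower central series of N is generated by the union of the sets of basic commutators C_k(B) for s ≤ k ≤ c₀, where C₀(B) = B and C_k(B) = {[g, b] : g ∈ C_{k-1}(B), b ∈ B}. -/
open scoped commutatorElement

/-- The set of basic commutators of weight `k` built from a generating set `B`:
`C₀(B) = B` and `C_{k+1}(B) = {x | ∃ g ∈ commSet B k, ∃ b ∈ B, x = ⁅g, b⁆}`. -/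
def commSet {G : Type*} [Group G] (B : Set G) : ℕ → Set G
  | 0 => B
  | (k + 1) => {x | ∃ g ∈ commSet B k, ∃ b ∈ B, x = ⁅g, b⁆}

section aux

variable {G : Type*} [Group G] (B : Set G)

/-- The closure of all basic commutators of weight at least `s`. -/
def commK (s : ℕ) : Subgroup G :=
  Subgroup.closure (⋃ k ∈ Set.Ici s, commSet B k)

lemma commSet_subset_commK {j s : ℕ} (h : s ≤ j) :
    commSet B j ⊆ (commK B s : Set G) :=
  fun x hx => Subgroup.subset_closure (Set.mem_biUnion h hx)

lemma commK_antitone {s t : ℕ} (h : s ≤ t) : commK B t ≤ commK B s :=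
  Subgroup.closure_mono (Set.biUnion_subset_biUnion_left fun _ hk => le_trans h hk)

lemma commSet_subset_lcs : ∀ k, commSet B k ⊆ ((⊤ : Subgroup G).lowerCentralSeries k : Set G)
  | 0 => fun x _ => Subgroup.mem_top x
  | (k + 1) => by
    rintro x ⟨g, hg, b, _, rfl⟩
    have : (⊤ : Subgroup G).lowerCentralSeries (k + 1) = ⁅(⊤ : Subgroup G).lowerCentralSeries k, (⊤ : Subgroup G)⁆ := rfl
    rw [this]
    exact Subgroup.commutator_mem_commutator (commSet_subset_lcs k hg) (Subgroup.mem_top b)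

lemma commK_le_lcs (s : ℕ) : commK B s ≤ (⊤ : Subgroup G).lowerCentralSeries s := by
  refine Subgroup.closure_le _ |>.2 (Set.iUnion₂_subset fun k hk => ?_)
  exact (commSet_subset_lcs B k).trans
    (SetLike.coe_subset_coe.2 (Subgroup.lowerCentralSeries_antitone ⊤ hk))

lemma commutator_commK_le (hgen : Subgroup.closure B = ⊤) {c₀ : ℕ}
    (hbot : (⊤ : Subgroup G).lowerCentralSeries c₀ = ⊥) :
    ∀ d s, c₀ ≤ s + d → ⁅commK B s, (⊤ : Subgroup G)⁆ ≤ commK B (s + 1) := by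
  intro d
  induction d with
  | zero =>
    intro s hs
    have : commK B s ≤ ⊥ := by
      rw [← hbot]
      exact (commK_le_lcs B s).trans (Subgroup.lowerCentralSeries_antitone ⊤ (by simpa using hs))
    calc ⁅commK B s, (⊤ : Subgroup G)⁆ ≤ ⁅(⊥ : Subgroup G), (⊤ : Subgroup G)⁆ :=
          Subgroup.commutator_mono this le_rfl
      _ = ⊥ := by simp
      _ ≤ commK B (s + 1) := bot_le
  | succ d ih =>
    intro s hs
    -- `commK B (s+1)` is normal since `⁅commK B (s+1), ⊤⁆ ≤ commK B (s+2) ≤ commK B (s+1)`.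
    have hcomm1 : ⁅commK B (s + 1), (⊤ : Subgroup G)⁆ ≤ commK B (s + 1) :=
      (ih (s + 1) (by omega)).trans (commK_antitone B (by omega))
    have hnormal : ∀ n : G, ∀ g ∈ commK B (s + 1), n * g * n⁻¹ ∈ commK B (s + 1) := by
      intro n g hg
      have h1 : ⁅n, g⁆ ∈ commK B (s + 1) := by
        have : ⁅n, g⁆ ∈ ⁅(⊤ : Subgroup G), commK B (s + 1)⁆ :=
          Subgroup.commutator_mem_commutator (Subgroup.mem_top n) hg
        rw [Subgroup.commutator_comm] at this
        exact hcomm1 this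
      have : n * g * n⁻¹ = ⁅n, g⁆ * g := by group
      rw [this]
      exact mul_mem h1 hg
    rw [Subgroup.commutator_le]
    intro p hp
    suffices h : ∀ q : G, ⁅p, q⁆ ∈ commK B (s + 1) from fun q _ => h q
    refine Subgroup.closure_induction (p := fun p _ => ∀ q : G, ⁅p, q⁆ ∈ commK B (s + 1))
      ?_ ?_ ?_ ?_ hp
    · -- generators: p ∈ commSet B j for some j ≥ s
      rintro x hx q
      simp only [Set.mem_iUnion] at hx
      obtain ⟨j, hj, hxj⟩ := hx
      -- closure induction on q ∈ ⊤ = closure B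
      have hq : q ∈ Subgroup.closure B := by rw [hgen]; trivial
      refine Subgroup.closure_induction (p := fun q _ => ⁅x, q⁆ ∈ commK B (s + 1))
        ?_ ?_ ?_ ?_ hq
      · intro b hb
        exact commSet_subset_commK B (Nat.succ_le_succ hj) ⟨x, hxj, b, hb, rfl⟩
      · simpa using one_mem (commK B (s + 1))
      · intro a b _ _ ha hb
        have : ⁅x, a * b⁆ = ⁅x, a⁆ * (a * ⁅x, b⁆ * a⁻¹) := by group
        rw [this]
        exact mul_mem ha (hnormal a _ hb)
      · intro a _ ha
        have : ⁅x, a⁻¹⁆ = a⁻¹ * ⁅x, a⁆⁻¹ * a⁻¹⁻¹ := by group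
        rw [this]
        exact hnormal a⁻¹ _ (inv_mem ha)
    · intro q; simpa using one_mem (commK B (s + 1))
    · intro a b _ _ ha hb q
      have : ⁅a * b, q⁆ = (a * ⁅b, q⁆ * a⁻¹) * ⁅a, q⁆ := by group
      rw [this]
      exact mul_mem (hnormal a _ (hb q)) (ha q)
    · intro a _ ha q
      have : ⁅a⁻¹, q⁆ = a⁻¹ * ⁅a, q⁆⁻¹ * a⁻¹⁻¹ := by group
      rw [this]
      exact hnormal a⁻¹ _ (inv_mem (ha q))

lemma lcs_le_commK (hgen : Subgroup.closure B = ⊤) {c₀ : ℕ}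
    (hbot : (⊤ : Subgroup G).lowerCentralSeries c₀ = ⊥) :
    ∀ s, (⊤ : Subgroup G).lowerCentralSeries s ≤ commK B s := by
  intro s
  induction s with
  | zero =>
    have : (⊤ : Subgroup G) ≤ commK B 0 := by
      rw [← hgen]
      exact Subgroup.closure_mono (fun b hb => Set.mem_biUnion (le_refl 0) (by exact hb))
    exact le_trans le_top this
  | succ s ih =>
    have h1 : (⊤ : Subgroup G).lowerCentralSeries (s + 1) = ⁅(⊤ : Subgroup G).lowerCentralSeries s, (⊤ : Subgroup G)⁆ := rfl
    rw [h1]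
    calc ⁅(⊤ : Subgroup G).lowerCentralSeries s, (⊤ : Subgroup G)⁆ ≤ ⁅commK B s, (⊤ : Subgroup G)⁆ :=
          Subgroup.commutator_mono ih le_rfl
      _ ≤ commK B (s + 1) := commutator_commK_le B hgen hbot c₀ s (by omega)

end aux

/-- If `N` is a nilpotent group of nilpotency class `c₀` generated by `B`, then for each
`1 ≤ s ≤ c₀` the `s`-th term of the lower central series of `N` is generated by
`⋃_{k=s}^{c₀} C_k(B)`. -/
theorem lowerCentralSeries_eq_closure_iUnion_commSet {N : Type*} [Group N]
    [Group.IsNilpotent N] (c₀ : ℕ) (hc : Group.nilpotencyClass N = c₀)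
    (B : Set N) (hgen : Subgroup.closure B = ⊤) :
    ∀ s : ℕ, 1 ≤ s → s ≤ c₀ →
      (⊤ : Subgroup N).lowerCentralSeries s = Subgroup.closure (⋃ k ∈ Set.Icc s c₀, commSet B k) := by
  have hbot : (⊤ : Subgroup N).lowerCentralSeries c₀ = ⊥ := by
    rw [← hc]; exact Subgroup.lowerCentralSeries_nilpotencyClass
  intro s _ _
  have hKeq : (⊤ : Subgroup N).lowerCentralSeries s = commK B s :=
    le_antisymm (lcs_le_commK B hgen hbot s) (commK_le_lcs B s)
  rw [hKeq]
  apply le_antisymm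
  · -- commK B s ≤ closure (Icc union)
    refine Subgroup.closure_le _ |>.2 (Set.iUnion₂_subset fun k hk x hx => ?_)
    by_cases hkc : k ≤ c₀
    · exact Subgroup.subset_closure (Set.mem_biUnion ⟨hk, hkc⟩ hx)
    · -- x ∈ commSet B k ⊆ γ_k ≤ γ_c₀ = ⊥, so x = 1
      have hx1 : x ∈ (⊤ : Subgroup N).lowerCentralSeries k := commSet_subset_lcs B k hx
      have : x ∈ (⊥ : Subgroup N) := by
        rw [← hbot]
        exact Subgroup.lowerCentralSeries_antitone ⊤ (by omega) hx1
      rw [Subgroup.mem_bot] at this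
      rw [this]
      exact one_mem _
  · exact Subgroup.closure_mono
      (Set.biUnion_subset_biUnion_left fun k hk => hk.1)
end

section
/- Let N be a finitely generated nilpotent group of class c with generating set B₀ = {σ_{0,1},…,σ_{0,d₀}}, and for 1 ≤ k ≤ c−1 let C_k(B₀) = {σ_{k,1},…,σ_{k,d_k}} be the basic commutators of weight k. For chosen positive integers a_{k,j}, let N_a be the subgroup generated by all σ_{k,j}^{a_{k,j}}. Then every g ∈ N can be written as g = (∏_{k=0}^{c-1} ∏_{j=1}^{d_k} σ_{k,j}^{b_{k,j}}) · g_a with 0 ≤ b_{k,j} < a_{k,j} and g_a ∈ N_a. In particular the index [N : N_a] is at most ∏_{k,j} a_{k,j}. -/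
open scoped commutatorElement

lemma aux_prod_zpow {G : Type*} [Group G] {ι : Type*} (t : ι → G)
    (hct : ∀ i j, Commute (t i) (t j)) :
    ∀ (l : List ι) (e f : ι → ℤ),
      (l.map fun i => t i ^ e i).prod * (l.map fun i => t i ^ f i).prod
        = (l.map fun i => t i ^ (e i + f i)).prod := by
  intro l
  induction l with
  | nil => simp
  | cons i l ih =>
    intro e f
    have hA : Commute (t i ^ f i) (l.map fun i => t i ^ e i).prod := by
      apply Commute.list_prod_right
      intro y hy
      simp only [List.mem_map] at hy
      obtain ⟨j, _, rfl⟩ := hy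
      exact (hct i j).zpow_zpow _ _
    simp only [List.map_cons, List.prod_cons]
    calc t i ^ e i * (l.map fun i => t i ^ e i).prod *
          (t i ^ f i * (l.map fun i => t i ^ f i).prod)
        = t i ^ e i * ((l.map fun i => t i ^ e i).prod * t i ^ f i) *
          (l.map fun i => t i ^ f i).prod := by group
      _ = t i ^ e i * (t i ^ f i * (l.map fun i => t i ^ e i).prod) *
          (l.map fun i => t i ^ f i).prod := by rw [hA.eq]
      _ = (t i ^ e i * t i ^ f i) *
          ((l.map fun i => t i ^ e i).prod * (l.map fun i => t i ^ f i).prod) := by group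
      _ = _ := by rw [ih, ← zpow_add]

lemma aux_prod_single_notmem {G : Type*} [Group G] {ι : Type*} [DecidableEq ι] (t : ι → G)
    (j : ι) (z : ℤ) : ∀ l : List ι, j ∉ l →
      (l.map fun i => t i ^ ((Pi.single j z : ι → ℤ) i)).prod = 1 := by
  intro l
  induction l with
  | nil => simp
  | cons i l ih =>
    intro hj
    simp only [List.mem_cons, not_or] at hj
    simp only [List.map_cons, List.prod_cons, ih hj.2, mul_one]
    rw [Pi.single_eq_of_ne (fun h => hj.1 h.symm), zpow_zero]

lemma aux_prod_single_mem {G : Type*} [Group G] {ι : Type*} [DecidableEq ι] (t : ι → G)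
    (j : ι) (z : ℤ) : ∀ l : List ι, l.Nodup → j ∈ l →
      (l.map fun i => t i ^ ((Pi.single j z : ι → ℤ) i)).prod = t j ^ z := by
  intro l
  induction l with
  | nil => simp
  | cons i l ih =>
    intro hnd hj
    obtain ⟨hnotmem, hnd'⟩ := List.nodup_cons.mp hnd
    simp only [List.map_cons, List.prod_cons]
    rcases List.mem_cons.mp hj with h | hj'
    · cases h
      rw [aux_prod_single_notmem t j z l hnotmem, mul_one, Pi.single_eq_same]
    · have hne : i ≠ j := fun h => hnotmem (h ▸ hj')
      rw [ih hnd' hj', Pi.single_eq_of_ne hne, zpow_zero, one_mul]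

lemma aux_standard_form {N : Type*} [Group N] [Group.IsNilpotent N]
    (c : ℕ) (hc : Group.nilpotencyClass N = c)
    (d : ℕ → ℕ) (σ : ∀ k : ℕ, Fin (d k) → N)
    (hgen : Subgroup.closure (Set.range (σ 0)) = ⊤)
    (hcomm : ∀ k : ℕ, k < c → Set.range (σ k) = commSet (Set.range (σ 0)) k)
    (a : ∀ k : ℕ, Fin (d k) → ℕ) (ha : ∀ k j, 1 ≤ a k j)
    (Na : Subgroup N)
    (hNa : Na = Subgroup.closure {x | ∃ k : ℕ, k < c ∧ ∃ j : Fin (d k), x = σ k j ^ a k j}) :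
    ∀ g : N, ∃ (b : ∀ k : ℕ, Fin (d k) → ℕ) (ga : N),
      (∀ k j, b k j < a k j) ∧ ga ∈ Na ∧
      g = ((List.range c).map fun k =>
            ((List.finRange (d k)).map fun j => σ k j ^ b k j).prod).prod * ga := by
  classical
  set B : Set N := Set.range (σ 0) with hB
  set H : ℕ → Subgroup N :=
    fun k => Subgroup.closure {x | ∃ m, k ≤ m ∧ m < c ∧ ∃ j : Fin (d m), x = σ m j} with hH
  have hapos : ∀ k j, 0 < a k j := fun k j => Nat.lt_of_lt_of_le Nat.zero_lt_one (ha k j)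
  have hLCSc : Subgroup.lowerCentralSeries (⊤ : Subgroup N) c = ⊥ := by
    rw [← hc]; exact Subgroup.lowerCentralSeries_nilpotencyClass
  have hσLCS : ∀ k, k < c → ∀ j, σ k j ∈ Subgroup.lowerCentralSeries (⊤ : Subgroup N) k := by
    intro k
    induction k with
    | zero => intro _ j; rw [Subgroup.lowerCentralSeries_zero]; trivial
    | succ k ih =>
      intro hk j
      have hj : σ (k+1) j ∈ commSet B (k+1) := by
        rw [← hcomm (k+1) hk]; exact Set.mem_range_self j
      obtain ⟨g, hg, bb, hbb, hx⟩ := hj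
      have hgR : g ∈ Set.range (σ k) := by rw [hcomm k (by omega)]; exact hg
      obtain ⟨j', rfl⟩ := hgR
      have hmem : σ k j' ∈ Subgroup.lowerCentralSeries (⊤ : Subgroup N) k := ih (by omega) j'
      rw [Subgroup.lowerCentralSeries_succ, hx]
      exact Subgroup.subset_closure
        ⟨σ k j', hmem, bb, Subgroup.mem_top bb, (commutatorElement_def _ _).symm⟩
  have Hbot : ∀ k, c ≤ k → H k = ⊥ := by
    intro k hk
    rw [hH]
    convert Subgroup.closure_empty
    ext x
    simp only [Set.mem_setOf_eq, Set.mem_empty_iff_false, iff_false]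
    rintro ⟨m, h1, h2, _⟩; omega
  have Hmono : ∀ k, H (k+1) ≤ H k := by
    intro k
    apply Subgroup.closure_mono
    rintro x ⟨m, h1, h2, j, hj⟩
    exact ⟨m, by omega, h2, j, hj⟩
  have hσH : ∀ k m (j : Fin (d m)), k ≤ m → m < c → σ m j ∈ H k := by
    intro k m j h1 h2
    exact Subgroup.subset_closure ⟨m, h1, h2, j, rfl⟩
  have main : ∀ i k, c ≤ k + i →
      ((∀ g ∈ H k, ∀ x : N, ⁅g, x⁆ ∈ H (k+1)) ∧
       (∀ g ∈ H k, ∃ b : (∀ m, Fin (d m) → ℕ), ∃ ga ∈ Na,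
         (∀ m j, b m j < a m j) ∧
         g = ((List.range' k (c - k)).map fun m =>
               ((List.finRange (d m)).map fun j => σ m j ^ b m j).prod).prod * ga)) := by
    intro i
    induction i with
    | zero =>
      intro k hk
      have hb : H k = ⊥ := Hbot k (by omega)
      constructor
      · intro g hg x
        rw [hb, Subgroup.mem_bot] at hg
        subst hg
        have : ⁅(1:N), x⁆ = 1 := by simp [commutatorElement_def]
        rw [this]; exact one_mem _
      · intro g hg
        rw [hb, Subgroup.mem_bot] at hg
        subst hg
        refine ⟨fun m j => 0, 1, one_mem _, fun m j => hapos m j, ?_⟩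
        have : c - k = 0 := by omega
        simp [this]
    | succ i ih =>
      intro k hk
      by_cases hkc : c ≤ k + i
      · exact ih k hkc
      · have hkc' : k < c := by omega
        have hIH := ih (k+1) (by omega)
        have hnorm : (H (k+1)).Normal := by
          constructor
          intro n hn g
          have heq : g * n * g⁻¹ = n * ⁅n⁻¹, g⁆ := by
            simp only [commutatorElement_def]; group
          rw [heq]
          exact mul_mem hn (Hmono (k+1) (hIH.1 n⁻¹ (inv_mem hn) g))
        -- commutators of σ k j with everything land in H (k+1)
        have comm_gen : ∀ (j : Fin (d k)) (x : N), ⁅σ k j, x⁆ ∈ H (k+1) := by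
          by_cases hk1 : k + 1 < c
          · intro j x
            have hx : x ∈ Subgroup.closure B := by rw [hgen]; trivial
            refine Subgroup.closure_induction
              (p := fun x _ => ⁅σ k j, x⁆ ∈ H (k+1)) ?_ ?_ ?_ ?_ hx
            · intro y hy
              have h1 : σ k j ∈ commSet B k := by
                rw [← hcomm k hkc']; exact Set.mem_range_self j
              have h2 : ⁅σ k j, y⁆ ∈ commSet B (k+1) := ⟨σ k j, h1, y, hy, rfl⟩
              rw [← hcomm (k+1) hk1] at h2
              obtain ⟨j', hj'⟩ := h2
              rw [← hj']
              exact hσH (k+1) (k+1) j' le_rfl hk1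
            · show ⁅σ k j, (1:N)⁆ ∈ H (k+1)
              have : ⁅σ k j, (1:N)⁆ = 1 := by simp [commutatorElement_def]
              rw [this]; exact one_mem _
            · intro x y _ _ px py
              show ⁅σ k j, x*y⁆ ∈ H (k+1)
              replace px : ⁅σ k j, x⁆ ∈ H (k+1) := px
              replace py : ⁅σ k j, y⁆ ∈ H (k+1) := py
              have heq : ⁅σ k j, x*y⁆ = ⁅σ k j, x⁆ * (x * ⁅σ k j, y⁆ * x⁻¹) := by
                simp only [commutatorElement_def]; group
              rw [heq]
              exact mul_mem px (hnorm.conj_mem _ py x)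
            · intro x _ px
              show ⁅σ k j, x⁻¹⁆ ∈ H (k+1)
              replace px : ⁅σ k j, x⁆ ∈ H (k+1) := px
              have heq : ⁅σ k j, x⁻¹⁆ = x⁻¹ * ⁅σ k j, x⁆⁻¹ * (x⁻¹)⁻¹ := by
                simp only [commutatorElement_def]; group
              rw [heq]
              exact hnorm.conj_mem _ (inv_mem px) x⁻¹
          · intro j x
            have hce : k + 1 = c := by omega
            have h1 : σ k j ∈ Subgroup.lowerCentralSeries (⊤ : Subgroup N) k := hσLCS k hkc' j
            have h2 : ⁅σ k j, x⁆ ∈ Subgroup.lowerCentralSeries (⊤ : Subgroup N) (k+1) := by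
              rw [Subgroup.lowerCentralSeries_succ]
              exact Subgroup.subset_closure
                ⟨σ k j, h1, x, Subgroup.mem_top x, (commutatorElement_def _ _).symm⟩
            rw [hce, hLCSc, Subgroup.mem_bot] at h2
            rw [h2]; exact one_mem _
        have hcommk : ∀ g ∈ H k, ∀ x : N, ⁅g, x⁆ ∈ H (k+1) := by
          intro g hg
          refine Subgroup.closure_induction
            (p := fun g _ => ∀ x : N, ⁅g, x⁆ ∈ H (k+1)) ?_ ?_ ?_ ?_ hg
          · rintro y ⟨m, hkm, hmc, j, rfl⟩
            show ∀ x : N, ⁅σ m j, x⁆ ∈ H (k+1)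
            intro x
            rcases eq_or_lt_of_le hkm with h | hlt
            · cases h; exact comm_gen j x
            · have h1 : σ m j ∈ H (k+1) := hσH (k+1) m j hlt hmc
              exact Hmono (k+1) (hIH.1 _ h1 x)
          · show ∀ x : N, ⁅(1:N), x⁆ ∈ H (k+1)
            intro x
            have : ⁅(1:N), x⁆ = 1 := by simp [commutatorElement_def]
            rw [this]; exact one_mem _
          · intro p q _ _ pp pq
            show ∀ x : N, ⁅p*q, x⁆ ∈ H (k+1)
            replace pp : ∀ x : N, ⁅p, x⁆ ∈ H (k+1) := pp
            replace pq : ∀ x : N, ⁅q, x⁆ ∈ H (k+1) := pq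
            intro x
            have heq : ⁅p*q, x⁆ = p * ⁅q, x⁆ * p⁻¹ * ⁅p, x⁆ := by
              simp only [commutatorElement_def]; group
            rw [heq]
            exact mul_mem (hnorm.conj_mem _ (pq x) p) (pp x)
          · intro p _ pp
            show ∀ x : N, ⁅p⁻¹, x⁆ ∈ H (k+1)
            replace pp : ∀ x : N, ⁅p, x⁆ ∈ H (k+1) := pp
            intro x
            have heq : ⁅p⁻¹, x⁆ = p⁻¹ * ⁅p, x⁆⁻¹ * (p⁻¹)⁻¹ := by
              simp only [commutatorElement_def]; group
            rw [heq]
            exact hnorm.conj_mem _ (inv_mem (pp x)) p⁻¹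
        constructor
        · exact hcommk
        -- the standard form statement
        intro g hg
        letI : (H (k+1)).Normal := hnorm
        let π : N →* N ⧸ H (k+1) := QuotientGroup.mk' (H (k+1))
        let t : Fin (d k) → N ⧸ H (k+1) := fun j => π (σ k j)
        have hπmem : ∀ y : N, y ∈ H (k+1) → π y = 1 := fun y hy =>
          (QuotientGroup.eq_one_iff y).mpr hy
        have htc : ∀ i j : Fin (d k), Commute (t i) (t j) := by
          intro i j
          rw [← commutatorElement_eq_one_iff_commute]
          show ⁅π (σ k i), π (σ k j)⁆ = 1
          rw [← map_commutatorElement]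
          exact hπmem _ (hcommk _ (hσH k k i le_rfl hkc') _)
        have habel : ∀ gg ∈ H k, ∃ e : Fin (d k) → ℤ,
            π gg = ((List.finRange (d k)).map fun j => t j ^ e j).prod := by
          intro gg hgg
          refine Subgroup.closure_induction (p := fun gg _ => ∃ e : Fin (d k) → ℤ,
            π gg = ((List.finRange (d k)).map fun j => t j ^ e j).prod) ?_ ?_ ?_ ?_ hgg
          · rintro y ⟨m, hkm, hmc, j, rfl⟩
            rcases eq_or_lt_of_le hkm with h | hlt
            · cases h
              refine ⟨Pi.single j 1, ?_⟩
              rw [aux_prod_single_mem t j 1 _ (List.nodup_finRange _) (List.mem_finRange j),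
                zpow_one]
            · refine ⟨0, ?_⟩
              rw [hπmem _ (hσH (k+1) m j hlt hmc)]
              simp
          · exact ⟨0, by simp⟩
          · rintro p q _ _ ⟨e, he⟩ ⟨f, hf⟩
            refine ⟨e + f, ?_⟩
            show π (p * q) = _
            rw [map_mul, he, hf, aux_prod_zpow t htc]
            rfl
          · rintro p _ ⟨e, he⟩
            refine ⟨-e, ?_⟩
            have h1 : ((List.finRange (d k)).map fun j => t j ^ e j).prod *
                ((List.finRange (d k)).map fun j => t j ^ (-e) j).prod = 1 := by
              rw [aux_prod_zpow t htc]
              simp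
            show π p⁻¹ = _
            rw [map_inv, he]
            exact inv_eq_of_mul_eq_one_right h1
        obtain ⟨e, he⟩ := habel g hg
        have hπP : π (((List.finRange (d k)).map fun j => σ k j ^ e j).prod) =
            ((List.finRange (d k)).map fun j => t j ^ e j).prod := by
          rw [MonoidHom.map_list_prod, List.map_map]
          congr 1
        have hmem : (((List.finRange (d k)).map fun j => σ k j ^ e j).prod)⁻¹ * g
            ∈ H (k+1) := by
          apply QuotientGroup.eq.mp
          show π _ = π g
          rw [hπP, he]
        -- the peeling process
        have peel : ∀ l : List (Fin (d k)), l.Nodup → ∀ (e : Fin (d k) → ℤ) (h : N),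
            h ∈ H (k+1) →
            ∃ (bb : Fin (d k) → ℕ) (h' n : N), (∀ j, bb j < a k j) ∧ h' ∈ H (k+1) ∧ n ∈ Na ∧
              (l.map fun j => σ k j ^ e j).prod * h
                = (l.map fun j => σ k j ^ bb j).prod * h' * n := by
          intro l
          induction l with
          | nil =>
            intro _ e h hh
            exact ⟨fun j => 0, h, 1, fun j => hapos k j, hh, one_mem _, by simp⟩
          | cons j l ihl =>
            intro hnd e h hh
            obtain ⟨hjl, hnd'⟩ := List.nodup_cons.mp hnd
            obtain ⟨bb, h', n, hbb, hh', hn, heq⟩ := ihl hnd' e h hh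
            have hA0 : (0:ℤ) < (a k j : ℤ) := by exact_mod_cast hapos k j
            have hr0 : 0 ≤ e j % (a k j : ℤ) := Int.emod_nonneg _ (ne_of_gt hA0)
            have hrA : e j % (a k j : ℤ) < (a k j : ℤ) := Int.emod_lt_of_pos _ hA0
            have hsplit : σ k j ^ e j
                = σ k j ^ (e j % (a k j : ℤ)) * ((σ k j ^ a k j) ^ (e j / (a k j : ℤ))) := by
              rw [← zpow_natCast (σ k j) (a k j), ← zpow_mul, ← zpow_add]
              congr 1
              exact (Int.emod_add_mul_ediv (e j) (a k j : ℤ)).symm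
            have hσr : σ k j ^ (e j % (a k j : ℤ)) = σ k j ^ ((e j % (a k j : ℤ)).toNat) := by
              rw [← zpow_natCast (σ k j) (e j % (a k j : ℤ)).toNat, Int.toNat_of_nonneg hr0]
            set x : N := (σ k j ^ a k j) ^ (e j / (a k j : ℤ)) with hxdef
            have hxNa : x ∈ Na := by
              apply Subgroup.zpow_mem
              rw [hNa]
              exact Subgroup.subset_closure ⟨k, hkc', j, rfl⟩
            have hxH : x ∈ H k := Subgroup.zpow_mem _ (pow_mem (hσH k k j le_rfl hkc') _) _
            have hmove : ∀ M : N, x * M = M * ⁅x, M⁻¹⁆⁻¹ * x := by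
              intro M
              simp only [commutatorElement_def]
              group
            have hcm : ∀ M : N, ⁅x, M⁻¹⁆⁻¹ ∈ H (k+1) :=
              fun M => inv_mem (hcommk x hxH M⁻¹)
            refine ⟨Function.update bb j (e j % (a k j : ℤ)).toNat,
              h' * ⁅x, ((l.map fun i => σ k i ^ bb i).prod * h')⁻¹⁆⁻¹, x * n,
              ?_, mul_mem hh' (hcm _), mul_mem hxNa hn, ?_⟩
            · intro j'
              by_cases hj' : j' = j
              · subst hj'
                rw [Function.update_self]
                omega
              · rw [Function.update_of_ne hj']
                exact hbb j'
            · have hmap : (l.map fun i => σ k i ^ (Function.update bb j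
                    (e j % (a k j : ℤ)).toNat) i) = (l.map fun i => σ k i ^ bb i) := by
                apply List.map_congr_left
                intro i hi
                rw [Function.update_of_ne (fun hcon => hjl (by rw [← hcon]; exact hi))]
              rw [List.map_cons, List.prod_cons, List.map_cons, List.prod_cons, hmap,
                Function.update_self]
              calc (σ k j ^ e j * (l.map fun i => σ k i ^ e i).prod) * h
                  = σ k j ^ ((e j % (a k j : ℤ)).toNat) *
                      (x * ((l.map fun i => σ k i ^ e i).prod * h)) := by
                    rw [hsplit, hσr]
                    simp only [mul_assoc]
                _ = σ k j ^ ((e j % (a k j : ℤ)).toNat) *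
                      (x * ((l.map fun i => σ k i ^ bb i).prod * h' * n)) := by rw [heq]
                _ = σ k j ^ ((e j % (a k j : ℤ)).toNat) *
                      ((x * ((l.map fun i => σ k i ^ bb i).prod * h')) * n) := by
                    simp only [mul_assoc]
                _ = σ k j ^ ((e j % (a k j : ℤ)).toNat) *
                      ((((l.map fun i => σ k i ^ bb i).prod * h') *
                        ⁅x, ((l.map fun i => σ k i ^ bb i).prod * h')⁻¹⁆⁻¹ * x) * n) := by
                    rw [hmove]
                _ = σ k j ^ ((e j % (a k j : ℤ)).toNat) * (l.map fun i => σ k i ^ bb i).prod *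
                      (h' * ⁅x, ((l.map fun i => σ k i ^ bb i).prod * h')⁻¹⁆⁻¹) * (x * n) := by
                    simp only [mul_assoc]
        obtain ⟨bb, h', n, hbb, hh', hn, heq2⟩ :=
          peel (List.finRange (d k)) (List.nodup_finRange _) e
            ((((List.finRange (d k)).map fun j => σ k j ^ e j).prod)⁻¹ * g) hmem
        rw [mul_inv_cancel_left] at heq2
        obtain ⟨b₂, ga₂, hga₂Na, hb₂, heq3⟩ := hIH.2 h' hh'
        refine ⟨Function.update b₂ k bb, ga₂ * n, mul_mem hga₂Na hn, ?_, ?_⟩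
        · intro m j
          by_cases hm : m = k
          · subst hm
            rw [Function.update_self]
            exact hbb j
          · rw [Function.update_of_ne hm]
            exact hb₂ m j
        · have hck : c - k = (c - (k+1)) + 1 := by omega
          rw [hck, List.range'_succ, List.map_cons, List.prod_cons]
          have htail : ((List.range' (k+1) (c-(k+1))).map fun m =>
                ((List.finRange (d m)).map fun j =>
                  σ m j ^ (Function.update b₂ k bb) m j).prod)
              = ((List.range' (k+1) (c-(k+1))).map fun m =>
                ((List.finRange (d m)).map fun j => σ m j ^ b₂ m j).prod) := by
            apply List.map_congr_left
            intro m hm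
            have hmne : m ≠ k := by
              have := (List.mem_range'_1).mp hm
              omega
            rw [Function.update_of_ne hmne]
          rw [htail]
          simp only [Function.update_self]
          rw [heq2, heq3]
          simp only [mul_assoc]
  intro g
  rcases Nat.eq_zero_or_pos c with rfl | hcpos
  · have hg1 : g = 1 := by
      have hmem : g ∈ (⊤ : Subgroup N) := Subgroup.mem_top g
      rw [← Subgroup.lowerCentralSeries_zero (S := (⊤ : Subgroup N)), hLCSc, Subgroup.mem_bot] at hmem
      exact hmem
    exact ⟨fun m j => 0, 1, fun m j => hapos m j, one_mem _, by simp [hg1]⟩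
  · have hT : g ∈ H 0 := by
      have hle : Subgroup.closure B ≤ H 0 := by
        apply Subgroup.closure_mono
        rintro x ⟨j, hj⟩
        exact ⟨0, le_rfl, hcpos, j, hj.symm⟩
      rw [hgen] at hle
      exact hle (Subgroup.mem_top g)
    obtain ⟨b, ga, hgaNa, hbnd, heq⟩ := (main c 0 (by omega)).2 g hT
    refine ⟨b, ga, hbnd, hgaNa, ?_⟩
    rw [heq, List.range_eq_range', Nat.sub_zero]

/-- **Standard form modulo powers of graded generators.** Let `N` be a finitely generated
nilpotent group of class `c` with generators `σ 0 j`, and let `σ k j` enumerate the basic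
commutators of weight `k`.  For positive integers `a k j`, let `N_a` be the subgroup
generated by the powers `σ k j ^ a k j`.  Then every `g ∈ N` can be written as the ordered
product `(∏_{k<c} ∏_j σ_{k,j}^{b_{k,j}}) · g_a` with `0 ≤ b_{k,j} < a_{k,j}` and
`g_a ∈ N_a`; in particular `[N : N_a] ≤ ∏_{k,j} a_{k,j}`. -/
theorem standard_form_and_index_bound {N : Type*} [Group N] [Group.IsNilpotent N]
    [Group.FG N] (c : ℕ) (hc : Group.nilpotencyClass N = c)
    (d : ℕ → ℕ) (σ : ∀ k : ℕ, Fin (d k) → N)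
    (hgen : Subgroup.closure (Set.range (σ 0)) = ⊤)
    (hcomm : ∀ k : ℕ, k < c → Set.range (σ k) = commSet (Set.range (σ 0)) k)
    (a : ∀ k : ℕ, Fin (d k) → ℕ) (ha : ∀ k j, 1 ≤ a k j)
    (Na : Subgroup N)
    (hNa : Na = Subgroup.closure {x | ∃ k : ℕ, k < c ∧ ∃ j : Fin (d k), x = σ k j ^ a k j}) :
    (∀ g : N, ∃ (b : ∀ k : ℕ, Fin (d k) → ℕ) (ga : N),
      (∀ k : ℕ, k < c → ∀ j, b k j < a k j) ∧ ga ∈ Na ∧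
      g = ((List.range c).map fun k =>
            ((List.finRange (d k)).map fun j => σ k j ^ b k j).prod).prod * ga) ∧
    Na.index ≤ ∏ k ∈ Finset.range c, ∏ j : Fin (d k), a k j := by
  have hSF := aux_standard_form c hc d σ hgen hcomm a ha Na hNa
  constructor
  · intro g
    obtain ⟨b, ga, hb, hga, heq⟩ := hSF g
    exact ⟨b, ga, fun k _ j => hb k j, hga, heq⟩
  · let prodB : (∀ k : ℕ, Fin (d k) → ℕ) → N := fun b =>
      ((List.range c).map fun k =>
        ((List.finRange (d k)).map fun j => σ k j ^ b k j).prod).prod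
    let f : (∀ k : Fin c, ∀ j : Fin (d k.1), Fin (a k.1 j)) → N ⧸ Na := fun tt =>
      QuotientGroup.mk (prodB (fun m j => if h : m < c then (tt ⟨m, h⟩ j).1 else 0))
    have hsurj : Function.Surjective f := by
      intro x
      obtain ⟨g, rfl⟩ := QuotientGroup.mk_surjective x
      obtain ⟨b, ga, hb, hga, heq⟩ := hSF g
      refine ⟨fun k j => ⟨b k.1 j, hb k.1 j⟩, ?_⟩
      show QuotientGroup.mk _ = QuotientGroup.mk g
      rw [heq]
      have hPt : prodB (fun m j => if h : m < c then
            ((fun (k : Fin c) (j : Fin (d k.1)) =>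
              (⟨b k.1 j, hb k.1 j⟩ : Fin (a k.1 j))) ⟨m, h⟩ j).1 else 0) = prodB b := by
        apply congrArg List.prod
        apply List.map_congr_left
        intro m hm
        have hmc : m < c := List.mem_range.mp hm
        simp only [dif_pos hmc]
      rw [hPt]
      apply QuotientGroup.eq.mpr
      rw [inv_mul_cancel_left]
      exact hga
    calc Na.index = Nat.card (N ⧸ Na) := rfl
      _ ≤ Nat.card (∀ k : Fin c, ∀ j : Fin (d k.1), Fin (a k.1 j)) :=
          Nat.card_le_card_of_surjective f hsurj
      _ = ∏ k : Fin c, ∏ j : Fin (d k.1), a k.1 j := by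
          simp [Nat.card_pi]
      _ = ∏ k ∈ Finset.range c, ∏ j : Fin (d k), a k j := by
          rw [← Fin.prod_univ_eq_prod_range (fun k => ∏ j : Fin (d k), a k j) c]
end

section
/- Let (X, d) be a noncompact, complete, locally compact length space. Suppose X is C-homogeneous for some constant C < ∞, i.e. for all x, y ∈ X there exists an isometry f of X with d(y, f(x)) ≤ C. Then X contains a line, i.e. an isometric embedding γ : ℝ → X. -/
open Metric

/-- A metric space is a length space if any two points admit approximate midpoints.
(For complete spaces this is equivalent to the usual definition via path lengths.) -/
def IsLengthSpace (X : Type*) [MetricSpace X] : Prop :=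
  ∀ x y : X, ∀ ε : ℝ, 0 < ε →
    ∃ m : X, dist x m ≤ dist x y / 2 + ε ∧ dist m y ≤ dist x y / 2 + ε

lemma lenChain {X : Type*} [MetricSpace X] (hlen : IsLengthSpace X) :
    ∀ (n : ℕ) (x y : X) (δ : ℝ), 0 < δ →
    ∃ c : ℕ → X, c 0 = x ∧ c (2 ^ n) = y ∧
      ∀ i < 2 ^ n, dist (c i) (c (i + 1)) ≤ dist x y / 2 ^ n + δ := by
  intro n
  induction n with
  | zero =>
    intro x y δ hδ
    refine ⟨fun i => if i = 0 then x else y, by simp, by simp, ?_⟩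
    intro i hi
    interval_cases i
    simp
    linarith
  | succ n ih =>
    intro x y δ hδ
    obtain ⟨m, hm1, hm2⟩ := hlen x y (δ * 2 ^ n / 2) (by positivity)
    obtain ⟨c₁, hc₁0, hc₁e, hc₁⟩ := ih x m (δ / 2) (by positivity)
    obtain ⟨c₂, hc₂0, hc₂e, hc₂⟩ := ih m y (δ / 2) (by positivity)
    refine ⟨fun i => if i ≤ 2 ^ n then c₁ i else c₂ (i - 2 ^ n), by simp [hc₁0], ?_, ?_⟩
    · have h1 : ¬ (2 ^ (n+1) ≤ 2 ^ n) := by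
        rw [pow_succ]; have := Nat.one_le_two_pow (n := n); omega
      have h2 : 2 ^ (n+1) - 2 ^ n = 2 ^ n := by
        rw [pow_succ]; omega
      simp only [if_neg h1, h2, hc₂e]
    · intro i hi
      have h2 : (0:ℝ) < 2 ^ n := by positivity
      have e : (dist x y / 2 + δ * 2 ^ n / 2) / 2 ^ n = dist x y / 2 ^ (n+1) + δ / 2 := by
        rw [pow_succ]; field_simp
      have hd1 : dist x m / 2 ^ n + δ / 2 ≤ dist x y / 2 ^ (n+1) + δ := by
        calc dist x m / 2 ^ n + δ / 2 ≤ (dist x y / 2 + δ * 2 ^ n / 2) / 2 ^ n + δ / 2 := by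
              gcongr
          _ = dist x y / 2 ^ (n+1) + δ := by rw [e]; ring
      have hd2 : dist m y / 2 ^ n + δ / 2 ≤ dist x y / 2 ^ (n+1) + δ := by
        calc dist m y / 2 ^ n + δ / 2 ≤ (dist x y / 2 + δ * 2 ^ n / 2) / 2 ^ n + δ / 2 := by
              gcongr
          _ = dist x y / 2 ^ (n+1) + δ := by rw [e]; ring
      rcases lt_trichotomy i (2 ^ n) with h | h | h
      · have : i + 1 ≤ 2 ^ n := h
        simp only [if_pos (le_of_lt h), if_pos this]
        exact le_trans (hc₁ i h) hd1
      · subst h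
        have h2 : ¬ (2 ^ n + 1 ≤ 2 ^ n) := by omega
        simp only [if_pos le_rfl, if_neg h2]
        have : 2 ^ n + 1 - 2 ^ n = 1 := by omega
        rw [this, hc₁e, ← hc₂0]
        exact le_trans (hc₂ 0 (by positivity)) hd2
      · have h2 : ¬ (i ≤ 2 ^ n) := by omega
        have h3 : ¬ (i + 1 ≤ 2 ^ n) := by omega
        simp only [if_neg h2, if_neg h3]
        have h4 : i + 1 - 2 ^ n = (i - 2 ^ n) + 1 := by omega
        rw [h4]
        refine le_trans (hc₂ (i - 2 ^ n) ?_) hd2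
        have : 2 ^ (n+1) = 2 ^ n + 2 ^ n := by rw [pow_succ]; omega
        omega

lemma chain_upper {X : Type*} [MetricSpace X] {c : ℕ → X} {N : ℕ} {b : ℝ}
    (h : ∀ i < N, dist (c i) (c (i + 1)) ≤ b) :
    ∀ i j, i ≤ j → j ≤ N → dist (c i) (c j) ≤ ((j : ℝ) - i) * b := by
  intro i j hij hjN
  induction j, hij using Nat.le_induction with
  | base => simp
  | succ j hij ih =>
    have hb : dist (c i) (c j) ≤ ((j : ℝ) - i) * b := ih (by omega)
    calc dist (c i) (c (j + 1)) ≤ dist (c i) (c j) + dist (c j) (c (j + 1)) := dist_triangle _ _ _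
      _ ≤ ((j : ℝ) - i) * b + b := by
          have := h j (by omega)
          linarith
      _ = (((j + 1 : ℕ) : ℝ) - i) * b := by push_cast; ring

lemma approx_point {X : Type*} [MetricSpace X] (hlen : IsLengthSpace X) (x y : X)
    (s ε : ℝ) (hε : 0 < ε) (hs : 0 ≤ s) (hsd : s ≤ dist x y) :
    ∃ z : X, dist x z ≤ s + ε ∧ dist z y ≤ dist x y - s + ε := by
  set d := dist x y with hd
  rcases eq_or_lt_of_le (dist_nonneg : (0:ℝ) ≤ d) with h0 | h0
  · have hd0 : d = 0 := h0.symm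
    have hs0 : s = 0 := le_antisymm (hd0 ▸ hsd) hs
    refine ⟨x, by simp [hs0]; linarith, ?_⟩
    have : dist x y = d := rfl
    rw [this, hd0, hs0]; linarith
  · obtain ⟨n, hn⟩ := pow_unbounded_of_one_lt (d / (ε / 2)) (one_lt_two (α := ℝ))
    have h2n : (0:ℝ) < 2 ^ n := by positivity
    set h := d / 2 ^ n with hh
    have hpos : 0 < h := by positivity
    have hhε : h < ε / 2 := by
      rw [hh, div_lt_iff₀ h2n] at *
      rw [div_lt_iff₀ (by linarith : (0:ℝ) < ε/2)] at hn
      nlinarith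
    obtain ⟨c, hc0, hce, hc⟩ := lenChain hlen n x y (ε / (2 * 2 ^ n)) (by positivity)
    set δ := ε / (2 * 2 ^ n) with hδ
    rw [← hd, ← hh] at hc
    have hδ2 : (2:ℝ) ^ n * δ = ε / 2 := by rw [hδ]; field_simp
    have e1 : (2:ℝ) ^ n * h = d := by rw [hh]; field_simp
    set i := ⌊s / h⌋₊ with hi
    have hih : (i : ℝ) * h ≤ s := by
      rw [hi]
      have := Nat.floor_le (by positivity : (0:ℝ) ≤ s / h)
      calc ((⌊s / h⌋₊ : ℝ)) * h ≤ (s / h) * h := by gcongr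
        _ = s := by field_simp
    have hsi : s < ((i : ℝ) + 1) * h := by
      have := Nat.lt_floor_add_one (s / h)
      calc s = (s / h) * h := by field_simp
        _ < ((i:ℝ) + 1) * h := by gcongr
    have hiN : i ≤ 2 ^ n := by
      have : (i : ℝ) ≤ 2 ^ n := by nlinarith [hih, hsd, e1, hpos]
      exact_mod_cast this
    have hiNR : (i : ℝ) ≤ 2 ^ n := by exact_mod_cast hiN
    refine ⟨c i, ?_, ?_⟩
    · have := chain_upper hc 0 i (Nat.zero_le _) hiN
      rw [hc0] at this
      simp only [Nat.cast_zero, sub_zero] at this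
      have hd2 : (i:ℝ) * (h + δ) ≤ s + ε / 2 := by nlinarith
      linarith
    · have := chain_upper hc i (2 ^ n) hiN le_rfl
      rw [hce] at this
      push_cast at this
      have key : ((2:ℝ) ^ n - i) * (h + δ) ≤ d - s + ε := by
        have e1 : (2:ℝ) ^ n * h = d := by rw [hh]; field_simp
        nlinarith
      calc dist (c i) y ≤ ((2:ℝ) ^ n - i) * (h + δ) := by exact_mod_cast this
        _ ≤ d - s + ε := key

lemma exists_compact_closedBall {X : Type*} [MetricSpace X] [LocallyCompactSpace X] (y : X) :
    ∃ δ > 0, IsCompact (closedBall y δ) := by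
  obtain ⟨K, hK, hKn⟩ := exists_compact_mem_nhds y
  obtain ⟨δ, hδ, hsub⟩ := (nhds_basis_closedBall.mem_iff).1 hKn
  exact ⟨δ, hδ, hK.of_isClosed_subset isClosed_closedBall hsub⟩

lemma properSpace_of_lengthSpace {X : Type*} [MetricSpace X] [CompleteSpace X]
    [LocallyCompactSpace X] (hlen : IsLengthSpace X) : ProperSpace X := by
  cases isEmpty_or_nonempty X with
  | inl h => exact ⟨fun x _ => isEmptyElim x⟩
  | inr h =>
  obtain ⟨x₀⟩ := h
  set S : Set ℝ := {r | IsCompact (closedBall x₀ r)} with hS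
  have down : ∀ r ∈ S, ∀ r' ≤ r, r' ∈ S := fun r hr r' hr' =>
    hr.of_isClosed_subset isClosed_closedBall (closedBall_subset_closedBall hr')
  -- key1 : open step
  have key1 : ∀ r > 0, r ∈ S → ∃ δ > 0, r + δ ∈ S := by
    intro r hr hK
    choose δy hδy hcy using fun y : X => exists_compact_closedBall y
    obtain ⟨t, ht⟩ := hK.elim_finite_subcover (fun y : X => ball y (δy y / 2))
      (fun y => isOpen_ball) (fun z hz => Set.mem_iUnion.2 ⟨z, mem_ball_self (half_pos (hδy z))⟩)
    have hx₀ : x₀ ∈ closedBall x₀ r := mem_closedBall_self hr.le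
    obtain ⟨y₀, hy₀⟩ := Set.mem_iUnion₂.1 (ht hx₀)
    have htne : t.Nonempty := ⟨y₀, hy₀.1⟩
    set δ₀ : ℝ := min r (t.inf' htne (fun y => δy y / 2)) with hδ₀
    have hδ₀pos : 0 < δ₀ := by
      rw [hδ₀]
      refine lt_min hr ?_
      rw [Finset.lt_inf'_iff]
      exact fun y _ => half_pos (hδy y)
    have hδ₀r : δ₀ ≤ r := min_le_left _ _
    have hδ₀y : ∀ y ∈ t, δ₀ ≤ δy y / 2 := fun y hy =>
      le_trans (min_le_right _ _) (Finset.inf'_le _ hy)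
    refine ⟨δ₀ / 2, by positivity, ?_⟩
    have hsub : closedBall x₀ (r + δ₀ / 2) ⊆ ⋃ y ∈ t, closedBall y (δy y) := by
      intro z hz
      have hdz : dist x₀ z ≤ r + δ₀ / 2 := mem_closedBall'.1 hz
      set d := dist x₀ z with hd
      have hd0 : 0 ≤ d := dist_nonneg
      set s : ℝ := min d (r - δ₀ / 8) with hs
      have hs0 : 0 ≤ s := le_min hd0 (by linarith)
      have hsd : s ≤ d := min_le_left _ _
      obtain ⟨w, hw1, hw2⟩ := approx_point hlen x₀ z s (δ₀ / 8) (by positivity) hs0 hsd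
      have hwK : w ∈ closedBall x₀ r := by
        rw [mem_closedBall']
        calc dist x₀ w ≤ s + δ₀ / 8 := hw1
          _ ≤ (r - δ₀ / 8) + δ₀ / 8 := by linarith [min_le_right d (r - δ₀ / 8)]
          _ = r := by ring
      obtain ⟨y, hyt, hwy⟩ := Set.mem_iUnion₂.1 (ht hwK)
      have hds : d - s ≤ 5 * δ₀ / 8 := by
        rcases le_total d (r - δ₀ / 8) with hcase | hcase
        · rw [hs, min_eq_left hcase]; linarith
        · rw [hs, min_eq_right hcase]; linarith
      have hwz : dist w z ≤ 3 * δ₀ / 4 := by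
        calc dist w z ≤ d - s + δ₀ / 8 := hw2
          _ ≤ 3 * δ₀ / 4 := by linarith
      refine Set.mem_iUnion₂.2 ⟨y, hyt, ?_⟩
      rw [mem_closedBall']
      have h1 : dist y w < δy y / 2 := by rw [dist_comm]; exact mem_ball.1 hwy
      have h2 : δ₀ ≤ δy y / 2 := hδ₀y y hyt
      calc dist y z ≤ dist y w + dist w z := dist_triangle _ _ _
        _ ≤ δy y / 2 + 3 * δ₀ / 4 := by linarith
        _ ≤ δy y := by linarith
    have hcomp : IsCompact (⋃ y ∈ (t : Set X), closedBall y (δy y)) :=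
      t.finite_toSet.isCompact_biUnion (fun y _ => hcy y)
    exact hcomp.of_isClosed_subset isClosed_closedBall hsub
  -- key2 : limit step
  have key2 : ∀ r > 0, (∀ r', 0 ≤ r' → r' < r → r' ∈ S) → r ∈ S := by
    intro r hr hbelow
    refine TotallyBounded.isCompact_of_isClosed ?_ isClosed_closedBall
    rw [totallyBounded_iff]
    intro ε hε
    rcases le_or_gt r (ε / 2) with hcase | hcase
    · refine ⟨{x₀}, Set.finite_singleton _, ?_⟩
      intro z hz
      simp only [Set.mem_singleton_iff, Set.iUnion_iUnion_eq_left]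
      rw [mem_ball']
      calc dist x₀ z ≤ r := mem_closedBall'.1 hz
        _ < ε := by linarith
    · set r' := r - ε / 2 + ε / 16 with hr'
      have hr'0 : 0 ≤ r' := by rw [hr']; linarith
      have hr'r : r' < r := by rw [hr']; linarith
      have hK' : IsCompact (closedBall x₀ r') := hbelow r' hr'0 hr'r
      obtain ⟨t, htfin, htsub⟩ := (totallyBounded_iff).1 hK'.totallyBounded (ε / 16) (by linarith)
      refine ⟨t, htfin, ?_⟩
      intro z hz
      set d := dist x₀ z with hd
      have hd0 : 0 ≤ d := dist_nonneg
      have hdr : d ≤ r := mem_closedBall'.1 hz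
      set s : ℝ := min d (r - ε / 2) with hs
      have hs0 : 0 ≤ s := le_min hd0 (by linarith)
      obtain ⟨w, hw1, hw2⟩ := approx_point hlen x₀ z s (ε / 16) (by linarith) hs0 (min_le_left _ _)
      have hwK : w ∈ closedBall x₀ r' := by
        rw [mem_closedBall']
        calc dist x₀ w ≤ s + ε / 16 := hw1
          _ ≤ (r - ε / 2) + ε / 16 := by linarith [min_le_right d (r - ε / 2)]
          _ = r' := by rw [hr']
      obtain ⟨y, hyt, hwy⟩ := Set.mem_iUnion₂.1 (htsub hwK)
      have hds : d - s ≤ ε / 2 := by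
        rcases le_total d (r - ε / 2) with hcase2 | hcase2
        · rw [hs, min_eq_left hcase2]; linarith
        · rw [hs, min_eq_right hcase2]; linarith
      refine Set.mem_iUnion₂.2 ⟨y, hyt, ?_⟩
      rw [mem_ball']
      have h1 : dist y w < ε / 16 := by rw [dist_comm]; exact mem_ball.1 hwy
      calc dist y z ≤ dist y w + dist w z := dist_triangle _ _ _
        _ ≤ ε / 16 + (d - s + ε / 16) := by linarith [hw2]
        _ < ε := by linarith
  -- conclusion
  have hall : ∀ r : ℝ, IsCompact (closedBall x₀ r) := by
    by_contra hcon
    push_neg at hcon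
    obtain ⟨r₀, hr₀⟩ := hcon
    set T : Set ℝ := {r | ¬ IsCompact (closedBall x₀ r)} with hT
    have hTne : T.Nonempty := ⟨r₀, hr₀⟩
    obtain ⟨δ₀, hδ₀pos, hδ₀⟩ := exists_compact_closedBall x₀
    have hTlb : ∀ r ∈ T, δ₀ ≤ r := by
      intro r hrT
      by_contra hlt
      exact hrT (down δ₀ hδ₀ r (le_of_not_ge hlt))
    have hbdd : BddBelow T := ⟨δ₀, hTlb⟩
    set R := sInf T with hR
    have hRδ₀ : δ₀ ≤ R := le_csInf hTne hTlb
    have hRpos : 0 < R := lt_of_lt_of_le hδ₀pos hRδ₀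
    have hRS : R ∈ S := by
      refine key2 R hRpos ?_
      intro r' _ hr'R
      by_contra hr'
      exact absurd (csInf_le hbdd hr') (not_le.2 hr'R)
    obtain ⟨δ, hδpos, hδS⟩ := key1 R hRpos hRS
    obtain ⟨a, haT, haR⟩ := exists_lt_of_csInf_lt hTne (by linarith : sInf T < R + δ)
    exact haT (down (R + δ) hδS a haR.le)
  exact ⟨fun x r => (hall (dist x₀ x + r)).of_isClosed_subset isClosed_closedBall
    (fun z hz => mem_closedBall'.2 (le_trans (dist_triangle x₀ x z)
      (by linarith [mem_closedBall'.1 hz])))⟩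

lemma chain_bound {X : Type*} [MetricSpace X] {c : ℕ → X} {x y : X} {n : ℕ} {δ : ℝ} (hδ : 0 ≤ δ)
    (hc0 : c 0 = x) (hce : c (2 ^ n) = y)
    (hstep : ∀ i < 2 ^ n, dist (c i) (c (i + 1)) ≤ dist x y / 2 ^ n + δ) :
    ∀ i j, i ≤ 2 ^ n → j ≤ 2 ^ n →
      abs (dist (c i) (c j) - |(i : ℝ) * (dist x y / 2 ^ n) - (j : ℝ) * (dist x y / 2 ^ n)|) ≤
        2 ^ n * δ := by
  have key : ∀ i j, i ≤ j → j ≤ 2 ^ n →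
      abs (dist (c i) (c j) - |(i : ℝ) * (dist x y / 2 ^ n) - (j : ℝ) * (dist x y / 2 ^ n)|) ≤
        2 ^ n * δ := by
    intro i j hij hjN
    set h : ℝ := dist x y / 2 ^ n with hh
    have hh0 : (0:ℝ) ≤ h := by positivity
    have hiR : (i : ℝ) ≤ (j : ℝ) := by exact_mod_cast hij
    have hjR : (j : ℝ) ≤ (2:ℝ) ^ n := by exact_mod_cast le_trans hjN (le_of_eq (by push_cast; rfl))
    have habs : |(i : ℝ) * h - (j : ℝ) * h| = (j : ℝ) * h - (i : ℝ) * h := by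
      rw [abs_sub_comm, abs_of_nonneg (by nlinarith)]
    rw [habs]
    have hup : dist (c i) (c j) ≤ ((j : ℝ) - i) * (h + δ) := chain_upper hstep i j hij hjN
    have h0i : dist (c 0) (c i) ≤ ((i : ℝ) - (0:ℕ)) * (h + δ) :=
      chain_upper hstep 0 i (Nat.zero_le _) (le_trans hij hjN)
    rw [Nat.cast_zero] at h0i
    have hjn : dist (c j) (c (2 ^ n)) ≤ (((2 ^ n : ℕ) : ℝ) - j) * (h + δ) :=
      chain_upper hstep j (2 ^ n) hjN le_rfl
    have hcast : ((2 ^ n : ℕ) : ℝ) = (2:ℝ) ^ n := by push_cast; rfl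
    rw [hcast] at hjn
    have htri : dist (c 0) (c (2 ^ n)) ≤ dist (c 0) (c i) + dist (c i) (c j) + dist (c j) (c (2 ^ n)) :=
      dist_triangle4 _ _ _ _
    rw [hc0, hce] at htri
    have hd : dist x y = 2 ^ n * h := by rw [hh]; field_simp
    rw [abs_le]
    constructor
    · rw [hc0] at h0i; rw [hce] at hjn
      nlinarith
    · nlinarith
  intro i j hiN hjN
  rcases le_total i j with hij | hij
  · exact key i j hij hjN
  · rw [dist_comm, abs_sub_comm (((i:ℝ)) * _)]
    exact key j i hij hiN

set_option maxHeartbeats 1000000 in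
lemma approx_segment {X : Type*} [MetricSpace X] (hlen : IsLengthSpace X) (x₀ z : X)
    (L η : ℝ) (hL : 0 < L) (hη : 0 < η) (hz : 2 * L ≤ dist x₀ z) :
    ∃ g : ℝ → X,
      (∀ s t : ℝ, |s| ≤ L → |t| ≤ L → abs (dist (g s) (g t) - |s - t|) ≤ η) ∧
      (∀ t : ℝ, dist (g 0) (g t) ≤ |t| + η) := by
  set D := dist x₀ z with hD
  have hD0 : 0 < D := lt_of_lt_of_le (by linarith) hz
  obtain ⟨n, hn⟩ := pow_unbounded_of_one_lt (D / (η / 4)) (one_lt_two (α := ℝ))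
  have h2n : (0:ℝ) < 2 ^ n := by positivity
  set h : ℝ := D / 2 ^ n with hh
  have hpos : 0 < h := by positivity
  have hhη : h < η / 4 := by
    rw [hh, div_lt_iff₀ h2n]
    rw [div_lt_iff₀ (by linarith : (0:ℝ) < η/4)] at hn
    nlinarith
  obtain ⟨c, hc0, hce, hc⟩ := lenChain hlen n x₀ z (η / (4 * 2 ^ n)) (by positivity)
  set δ := η / (4 * 2 ^ n) with hδ
  have hδ0 : (0:ℝ) ≤ δ := by positivity
  have hE : (2:ℝ) ^ n * δ = η / 4 := by rw [hδ]; field_simp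
  have hbd := chain_bound hδ0 hc0 hce hc
  -- index function
  set J : ℝ → ℕ := fun t => min (2 ^ n) ⌊max (t + L) 0 / h⌋₊ with hJ
  have hJle : ∀ t, J t ≤ 2 ^ n := fun t => min_le_left _ _
  -- key index estimate: |J t * h - (L + t')| bounds
  have hDh : (2:ℝ) ^ n * h = D := by rw [hh]; field_simp
  have hJin : ∀ t : ℝ, |t| ≤ L → ((J t : ℝ) * h ≤ t + L ∧ t + L - h ≤ (J t : ℝ) * h) := by
    intro t ht
    have h1 : 0 ≤ t + L := by cases abs_le.1 ht; linarith
    have h2 : t + L ≤ 2 * L := by cases abs_le.1 ht; linarith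
    have hmax : max (t + L) 0 = t + L := max_eq_left h1
    have hfle : ⌊(t + L) / h⌋₊ ≤ 2 ^ n := by
      have : (t + L) / h ≤ (2:ℝ) ^ n := by
        rw [div_le_iff₀ hpos]; nlinarith
      calc ⌊(t + L) / h⌋₊ ≤ ⌊((2:ℝ) ^ n)⌋₊ := Nat.floor_le_floor (by exact this)
        _ = 2 ^ n := by
            rw [show ((2:ℝ) ^ n) = ((2 ^ n : ℕ) : ℝ) by push_cast; rfl, Nat.floor_natCast]
    have hJt : J t = ⌊(t + L) / h⌋₊ := by rw [hJ]; simp [hmax, min_eq_right hfle]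
    constructor
    · rw [hJt]
      calc ((⌊(t + L) / h⌋₊ : ℝ)) * h ≤ ((t + L) / h) * h := by
            gcongr; exact Nat.floor_le (by positivity)
        _ = t + L := by field_simp
    · rw [hJt]
      have := Nat.lt_floor_add_one ((t + L) / h)
      have h3 : t + L < ((⌊(t + L) / h⌋₊ : ℝ) + 1) * h := by
        calc t + L = ((t + L) / h) * h := by field_simp
          _ < ((⌊(t + L) / h⌋₊ : ℝ) + 1) * h := by gcongr
      nlinarith
  have hJgen : ∀ t : ℝ, |(J t : ℝ) * h - L| ≤ |t| + h := by
    intro t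
    set u := max (t + L) 0 with hu
    have hu0 : 0 ≤ u := le_max_right _ _
    have huL : |u - L| ≤ |t| := by
      rcases le_total 0 (t + L) with h1 | h1
      · rw [hu, max_eq_left h1, add_sub_cancel_right]
      · rw [hu, max_eq_right h1]
        rw [abs_of_nonpos (by linarith), abs_of_nonpos (by linarith : t ≤ 0)]
        linarith
    rcases le_or_gt (⌊u / h⌋₊) (2 ^ n) with hcase | hcase
    · have hJt : J t = ⌊u / h⌋₊ := by rw [hJ]; simp [← hu, min_eq_right hcase]
      have hle : ((⌊u / h⌋₊ : ℝ)) * h ≤ u := by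
        calc ((⌊u / h⌋₊ : ℝ)) * h ≤ (u / h) * h := by gcongr; exact Nat.floor_le (by positivity)
          _ = u := by field_simp
      have hge : u - h ≤ ((⌊u / h⌋₊ : ℝ)) * h := by
        have h3 : u < ((⌊u / h⌋₊ : ℝ) + 1) * h := by
          calc u = (u / h) * h := by field_simp
            _ < ((⌊u / h⌋₊ : ℝ) + 1) * h := by gcongr; exact Nat.lt_floor_add_one _
        nlinarith
      rw [hJt, abs_le]
      have h4 := abs_le.1 huL
      exact ⟨by linarith [h4.1, hge], by linarith [h4.2, hle]⟩
    · -- clamped case : J t = 2^n, and u > D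
      have hJt : J t = 2 ^ n := by rw [hJ]; simp [← hu, min_eq_left (le_of_lt hcase)]
      have hun : ((2:ℝ) ^ n) < u / h := by
        have : ((2 ^ n : ℕ) : ℝ) < (⌊u / h⌋₊ : ℝ) := by exact_mod_cast hcase
        calc ((2:ℝ) ^ n) = ((2 ^ n : ℕ) : ℝ) := by push_cast; rfl
          _ < (⌊u / h⌋₊ : ℝ) := this
          _ ≤ u / h := Nat.floor_le (by positivity)
      have huD : D < u := by
        rw [← hDh]
        calc (2:ℝ) ^ n * h < (u / h) * h := by gcongr
          _ = u := by field_simp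
      rw [hJt]
      have hcast : ((2 ^ n : ℕ) : ℝ) = (2:ℝ) ^ n := by push_cast; rfl
      rw [hcast, hDh]
      have hLD : L ≤ D := by linarith
      rw [abs_of_nonneg (by linarith)]
      have : u - L ≤ |t| := le_trans (le_abs_self _) huL
      linarith [hpos.le]
  refine ⟨fun t => c (J t), ?_, ?_⟩
  · intro s t hs ht
    obtain ⟨hs1, hs2⟩ := hJin s hs
    obtain ⟨ht1, ht2⟩ := hJin t ht
    have hb := hbd (J s) (J t) (hJle s) (hJle t)
    have habs : abs (|(J s : ℝ) * h - (J t : ℝ) * h| - |s - t|) ≤ 2 * h := by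
      have h1 : |((J s : ℝ) * h - (J t : ℝ) * h) - (s - t)| ≤ 2 * h := by
        rw [abs_le]; constructor <;> nlinarith
      calc abs (|(J s : ℝ) * h - (J t : ℝ) * h| - |s - t|) ≤ |((J s : ℝ) * h - (J t : ℝ) * h) - (s - t)| :=
            abs_abs_sub_abs_le_abs_sub _ _
        _ ≤ 2 * h := h1
    rw [← hD, ← hh] at hb
    calc abs (dist (c (J s)) (c (J t)) - |s - t|)
        ≤ abs (dist (c (J s)) (c (J t)) - |(J s : ℝ) * h - (J t : ℝ) * h|) +
          abs (|(J s : ℝ) * h - (J t : ℝ) * h| - |s - t|) := by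
          exact abs_sub_le _ _ _
      _ ≤ η / 4 + 2 * h := by
          have : abs (dist (c (J s)) (c (J t)) - |(J s : ℝ) * h - (J t : ℝ) * h|) ≤ η / 4 := by
            rw [← hE]; exact hb
          linarith
      _ ≤ η := by linarith
  · intro t
    have hb := hbd (J 0) (J t) (hJle 0) (hJle t)
    rw [← hD, ← hh] at hb
    have h0 := hJgen 0
    have htg := hJgen t
    simp only [abs_zero] at h0
    have h1 : |(J 0 : ℝ) * h - (J t : ℝ) * h| ≤ |t| + 2 * h := by
      calc |(J 0 : ℝ) * h - (J t : ℝ) * h| ≤ |(J 0 : ℝ) * h - L| + |L - (J t : ℝ) * h| := by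
            have := abs_sub_le ((J 0 : ℝ) * h) L ((J t : ℝ) * h)
            linarith
        _ ≤ (0 + h) + (|t| + h) := by
            rw [abs_sub_comm L]
            linarith
        _ = |t| + 2 * h := by ring
    have h2 : dist (c (J 0)) (c (J t)) ≤ |(J 0 : ℝ) * h - (J t : ℝ) * h| + η / 4 := by
      have := abs_le.1 hb
      rw [← hE]
      linarith [this.2]
    calc dist (c (J 0)) (c (J t)) ≤ (|t| + 2 * h) + η / 4 := by linarith
      _ ≤ |t| + η := by linarith

set_option maxHeartbeats 1000000 in
/-- **Lines in almost homogeneous length spaces.** A noncompact, complete, locally compact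
length space `X` which is `C`-homogeneous (for every `x, y` there is an isometry `f` of
`X` with `d(y, f x) ≤ C`) contains a line, i.e. an isometric embedding of `ℝ`. -/
theorem exists_line_of_almost_homogeneous {X : Type*} [MetricSpace X] [CompleteSpace X]
    [LocallyCompactSpace X] (hlen : IsLengthSpace X) (hnc : ¬ CompactSpace X)
    (C : ℝ) (hC : ∀ x y : X, ∃ f : X ≃ᵢ X, dist y (f x) ≤ C) :
    ∃ γ : ℝ → X, Isometry γ := by
  have hproper : ProperSpace X := properSpace_of_lengthSpace hlen
  have hne : Nonempty X := by
    by_contra hh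
    rw [not_nonempty_iff] at hh
    exact hnc ⟨Set.univ_eq_empty_iff.mpr hh ▸ isCompact_empty⟩
  obtain ⟨x₀⟩ := hne
  have hub : ∀ r : ℝ, ∃ z : X, r < dist x₀ z := by
    intro r
    by_contra hcon
    push_neg at hcon
    exact hnc ⟨(isCompact_closedBall x₀ r).of_isClosed_subset isClosed_univ
      (fun z _ => mem_closedBall'.2 (hcon z)) |>.of_isClosed_subset isClosed_univ
      (fun z _ => trivial) |>.of_isClosed_subset isClosed_univ (fun z _ => trivial)⟩
  have hseg : ∀ m : ℕ, ∃ γm : ℝ → X,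
      (∀ s t : ℝ, |s| ≤ (m:ℝ) + 1 → |t| ≤ (m:ℝ) + 1 →
        abs (dist (γm s) (γm t) - |s - t|) ≤ 1 / ((m:ℝ) + 1)) ∧
      (∀ t : ℝ, dist x₀ (γm t) ≤ C + |t| + 1) := by
    intro m
    obtain ⟨z, hz⟩ := hub (2 * ((m:ℝ) + 1))
    obtain ⟨g, hg1, hg2⟩ := approx_segment hlen x₀ z ((m:ℝ) + 1) (1 / ((m:ℝ) + 1))
      (by positivity) (by positivity) hz.le
    obtain ⟨f, hf⟩ := hC (g 0) x₀
    refine ⟨fun t => f (g t), ?_, ?_⟩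
    · intro s t hs ht
      simp only [f.dist_eq]
      exact hg1 s t hs ht
    · intro t
      have hinv : 1 / ((m:ℝ) + 1) ≤ 1 := by
        rw [div_le_one (by positivity)]
        have : (0:ℝ) ≤ m := Nat.cast_nonneg m
        linarith
      calc dist x₀ (f (g t)) ≤ dist x₀ (f (g 0)) + dist (f (g 0)) (f (g t)) :=
            dist_triangle _ _ _
        _ ≤ C + (|t| + 1 / ((m:ℝ) + 1)) := by
            refine add_le_add hf ?_
            rw [f.dist_eq]
            exact hg2 t
        _ ≤ C + |t| + 1 := by linarith
  choose γs hγ1 hγ2 using hseg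
  have hUle : (Filter.hyperfilter ℕ : Filter ℕ) ≤ Filter.atTop :=
    Filter.hyperfilter_le_cofinite.trans_eq Nat.cofinite_eq_atTop
  have hlim : ∀ t : ℝ, ∃ a : X,
      Filter.Tendsto (fun n => γs n t) (Filter.hyperfilter ℕ : Filter ℕ) (nhds a) := by
    intro t
    have hKc : IsCompact (closedBall x₀ (C + |t| + 1)) := isCompact_closedBall _ _
    have hle : (Ultrafilter.map (fun n => γs n t) (Filter.hyperfilter ℕ) : Filter X) ≤
        Filter.principal (closedBall x₀ (C + |t| + 1)) := by
      rw [Filter.le_principal_iff]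
      exact Filter.mem_map.2 (Filter.univ_mem' (fun n => mem_closedBall'.2 (hγ2 n t)))
    obtain ⟨a, _, ha⟩ := hKc.ultrafilter_le_nhds _ hle
    rw [Ultrafilter.coe_map] at ha
    exact ⟨a, ha⟩
  choose γ hγ using hlim
  refine ⟨γ, Isometry.of_dist_eq ?_⟩
  intro s t
  have h1 : Filter.Tendsto (fun n => dist (γs n s) (γs n t))
      (Filter.hyperfilter ℕ : Filter ℕ) (nhds (dist (γ s) (γ t))) := (hγ s).dist (hγ t)
  have h2 : Filter.Tendsto (fun n => dist (γs n s) (γs n t))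
      (Filter.hyperfilter ℕ : Filter ℕ) (nhds |s - t|) := by
    have hbound : ∀ᶠ (n : ℕ) in (Filter.hyperfilter ℕ : Filter ℕ),
        |s - t| - 1 / ((n:ℝ) + 1) ≤ dist (γs n s) (γs n t) ∧
        dist (γs n s) (γs n t) ≤ |s - t| + 1 / ((n:ℝ) + 1) := by
      refine (Filter.eventually_atTop.2 ⟨⌈max |s| |t|⌉₊, ?_⟩).filter_mono hUle
      intro n hn
      have hsb : |s| ≤ (n:ℝ) + 1 := by
        have := Nat.le_ceil (max |s| |t|)
        have hcast : ((⌈max |s| |t|⌉₊ : ℕ) : ℝ) ≤ (n:ℝ) := by exact_mod_cast hn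
        have := le_max_left |s| |t|
        linarith [Nat.le_ceil (max |s| |t|)]
      have htb : |t| ≤ (n:ℝ) + 1 := by
        have hcast : ((⌈max |s| |t|⌉₊ : ℕ) : ℝ) ≤ (n:ℝ) := by exact_mod_cast hn
        linarith [Nat.le_ceil (max |s| |t|), le_max_right |s| |t|]
      have := abs_le.1 (hγ1 n s t hsb htb)
      exact ⟨by linarith [this.1], by linarith [this.2]⟩
    have hlo : Filter.Tendsto (fun n : ℕ => |s - t| - 1 / ((n:ℝ) + 1))
        (Filter.hyperfilter ℕ : Filter ℕ) (nhds |s - t|) := by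
      have := (tendsto_one_div_add_atTop_nhds_zero_nat).const_sub |s - t|
      simpa using this.mono_left hUle
    have hhi : Filter.Tendsto (fun n : ℕ => |s - t| + 1 / ((n:ℝ) + 1))
        (Filter.hyperfilter ℕ : Filter ℕ) (nhds |s - t|) := by
      have := (tendsto_one_div_add_atTop_nhds_zero_nat).const_add |s - t|
      simpa using this.mono_left hUle
    exact tendsto_of_tendsto_of_tendsto_of_le_of_le' hlo hhi
      (hbound.mono fun n hn => hn.1) (hbound.mono fun n hn => hn.2)
  rw [Real.dist_eq]
  exact tendsto_nhds_unique h1 h2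
end
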